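/- Combining the two regimes: let μ ∈ (0,2), λ₀ > 0, and f_λ(x) = (λ + ⟨x⟩^{-μ})^{1/2}. Then there exists C = C(μ) > 0 such that for all λ ∈ [0, λ₀] and all u ∈ B(|x|), ‖f_λ^{-1/2} u‖_{B(f_λ⟨x⟩)} ≤ C ‖u‖_{B(|x|)}, where B(|x|) and B(f_λ⟨x⟩) are the dyadic Besov spaces of the multiplication operators |x| and f_λ(x)⟨x⟩ on L²(ℝ^d). -/

import Mathlib

open MeasureTheory Filter Topology
open scoped ENNReal

noncomputable section

/-- The dyadic radii: `R_0 = 0`, `R_j = 2^(j-1)` for `j ≥ 1`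
(here indexed so that `dyadicR (k+1) = 2^k`). -/
def dyadicR : ℕ → ℝ
  | 0 => 0
  | k + 1 => 2 ^ k

/-- For the self-adjoint multiplication operator by the real function `a` on `L²(μ)`,
the norm of the spectral block `F(R_k ≤ |A| < R_{k+1}) u`, i.e. of the restriction of
`u` to `{R_k ≤ |a| < R_{k+1}}`, valued in `ℝ≥0∞`. -/
def blockE {α : Type*} [MeasurableSpace α] (μ : Measure α) (a : α → ℝ) (u : α → ℂ)
    (k : ℕ) : ℝ≥0∞ :=
  eLpNorm (Set.indicator {x | dyadicR k ≤ |a x| ∧ |a x| < dyadicR (k + 1)} u) 2 μ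

/-- The Besov norm `‖u‖_{B(a)} = Σ_j R_j^{1/2} ‖F_j u‖` of the multiplication
operator by `a` on `L²(μ)`, valued in `ℝ≥0∞`; `u ∈ B(a)` iff this is finite. -/
def besovE {α : Type*} [MeasurableSpace α] (μ : Measure α) (a : α → ℝ) (u : α → ℂ) :
    ℝ≥0∞ :=
  ∑' k : ℕ, ENNReal.ofReal (Real.sqrt (dyadicR (k + 1))) * blockE μ a u k

/-- The dual Besov norm `‖u‖_{B(a)*} = sup_j R_j^{-1/2} ‖F_j u‖`, valued in `ℝ≥0∞`. -/
def dualE {α : Type*} [MeasurableSpace α] (μ : Measure α) (a : α → ℝ) (u : α → ℂ) :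
    ℝ≥0∞ :=
  ⨆ k : ℕ, (ENNReal.ofReal (Real.sqrt (dyadicR (k + 1))))⁻¹ * blockE μ a u k

/-- The Japanese bracket `⟨x⟩ = (|x|² + 1)^{1/2}` on `ℝ^d`. -/
def jap {d : ℕ} (x : EuclideanSpace ℝ (Fin d)) : ℝ := Real.sqrt (‖x‖ ^ 2 + 1)

/-! ### Auxiliary lemmas -/

lemma dyadicR_nonneg (k : ℕ) : 0 ≤ dyadicR k := by
  cases k with
  | zero => simp [dyadicR]
  | succ k => exact pow_nonneg (by norm_num) k

lemma dyadicR_mono : Monotone dyadicR := by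
  apply monotone_nat_of_le_succ
  intro k
  cases k with
  | zero => simp [dyadicR]
  | succ k =>
      simpa [dyadicR] using pow_le_pow_right₀ (by norm_num : (1:ℝ) ≤ 2) (Nat.le_succ k)

lemma exists_dyadic {r : ℝ} (hr : 0 ≤ r) : ∃ k, dyadicR k ≤ r ∧ r < dyadicR (k+1) := by
  rcases lt_or_ge r 1 with h | h
  · exact ⟨0, hr, by simpa [dyadicR] using h⟩
  · have hP : ∃ n, r < 2 ^ n := pow_unbounded_of_one_lt r (by norm_num : (1:ℝ) < 2)
    classical
    let n := Nat.find hP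
    have hn : r < 2 ^ n := Nat.find_spec hP
    have hn0 : n ≠ 0 := by
      intro h0
      rw [h0] at hn
      simp at hn; linarith
    obtain ⟨m, hm⟩ := Nat.exists_eq_succ_of_ne_zero hn0
    have hmin : ¬ r < 2 ^ m := Nat.find_min hP (by omega)
    refine ⟨m + 1, ?_, ?_⟩
    · simpa [dyadicR] using not_lt.mp hmin
    · rw [hm] at hn
      simpa [dyadicR] using hn

/-- ℓ² ≤ ℓ¹ in `ℝ≥0∞`. -/
lemma tsum_rpow_half_le (a : ℕ → ℝ≥0∞) :
    (∑' k, a k) ^ (1/2 : ℝ) ≤ ∑' k, (a k) ^ (1/2 : ℝ) := by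
  set S := ∑' k, (a k) ^ (1/2 : ℝ) with hS
  have h1 : ∑' k, a k ≤ S ^ (2 : ℝ) := by
    have h2 : ∀ k, a k ≤ (a k) ^ (1/2 : ℝ) * S := by
      intro k
      have h3 : a k = (a k) ^ (1/2 : ℝ) * (a k) ^ (1/2 : ℝ) := by
        rw [← ENNReal.rpow_add_of_nonneg _ _ (by norm_num) (by norm_num)]
        norm_num
      calc a k = (a k) ^ (1/2 : ℝ) * (a k) ^ (1/2 : ℝ) := h3
        _ ≤ (a k) ^ (1/2 : ℝ) * S := mul_le_mul_right (ENNReal.le_tsum k) _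
    calc ∑' k, a k ≤ ∑' k, (a k) ^ (1/2 : ℝ) * S := ENNReal.tsum_le_tsum h2
      _ = S * S := by rw [ENNReal.tsum_mul_right]
      _ = S ^ (2 : ℝ) := by
          rw [show (2:ℝ) = ((2:ℕ):ℝ) by norm_num, ENNReal.rpow_natCast]; ring
  calc (∑' k, a k) ^ (1/2 : ℝ) ≤ (S ^ (2:ℝ)) ^ (1/2 : ℝ) :=
        ENNReal.rpow_le_rpow h1 (by norm_num)
    _ = S := by rw [← ENNReal.rpow_mul]; norm_num

lemma eLpNorm_indicator_eq_lintegral {α : Type*} [MeasurableSpace α] (μ : Measure α)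
    (v : α → ℂ) {S : Set α} (hS : MeasurableSet S) :
    eLpNorm (S.indicator v) 2 μ
      = (∫⁻ x in S, (‖v x‖₊ : ℝ≥0∞) ^ (2:ℝ) ∂μ) ^ (1/2 : ℝ) := by
  rw [eLpNorm_eq_lintegral_rpow_enorm_toReal (by norm_num) (by norm_num),
    ← lintegral_indicator hS]
  have ht : ((2:ℝ≥0∞)).toReal = (2:ℝ) := by norm_num
  rw [ht]
  congr 1
  refine lintegral_congr fun x => ?_
  by_cases hx : x ∈ S
  · simp [Set.indicator_of_mem hx, enorm_eq_nnnorm]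
  · simp [Set.indicator_of_notMem hx,
      ENNReal.zero_rpow_of_pos (by norm_num : (0:ℝ) < 2)]

/-- Decomposition of an indicator `eLpNorm` over a disjoint measurable family. -/
lemma eLpNorm_indicator_le_tsum {α : Type*} [MeasurableSpace α] (μ : Measure α)
    (v : α → ℂ) (T : ℕ → Set α) (hm : ∀ k, MeasurableSet (T k))
    (hd : Pairwise (Function.onFun Disjoint T)) :
    eLpNorm ((⋃ k, T k).indicator v) 2 μ ≤ ∑' k, eLpNorm ((T k).indicator v) 2 μ := by
  rw [eLpNorm_indicator_eq_lintegral μ v (MeasurableSet.iUnion hm),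
    lintegral_iUnion hm hd]
  refine le_trans (tsum_rpow_half_le _) ?_
  refine ENNReal.tsum_le_tsum fun k => ?_
  rw [eLpNorm_indicator_eq_lintegral μ v (hm k)]

/-- Scaled comparison of indicator `eLpNorm`s from a pointwise bound on the set. -/
lemma block_scale {α : Type*} [MeasurableSpace α] (μ : Measure α) (v u : α → ℂ)
    (T : Set α) (c C : ℝ) (hc : 0 ≤ c) (hC : 0 ≤ C)
    (h : ∀ x ∈ T, c * ‖v x‖ ≤ C * ‖u x‖) :
    ENNReal.ofReal c * eLpNorm (T.indicator v) 2 μ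
      ≤ ENNReal.ofReal C * eLpNorm (T.indicator u) 2 μ := by
  have e1 : ENNReal.ofReal c * eLpNorm (T.indicator v) 2 μ
      = eLpNorm (c • T.indicator v) 2 μ := by
    rw [eLpNorm_const_smul, Real.enorm_eq_ofReal hc]
  have e2 : ENNReal.ofReal C * eLpNorm (T.indicator u) 2 μ
      = eLpNorm (C • T.indicator u) 2 μ := by
    rw [eLpNorm_const_smul, Real.enorm_eq_ofReal hC]
  rw [e1, e2]
  refine eLpNorm_mono fun x => ?_
  simp only [Pi.smul_apply, norm_smul, Real.norm_of_nonneg hc, Real.norm_of_nonneg hC]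
  by_cases hx : x ∈ T
  · simpa [Set.indicator_of_mem hx] using h x hx
  · simp [Set.indicator_of_notMem hx]

lemma one_le_dyadicR_succ (k : ℕ) : 1 ≤ dyadicR (k+1) := by
  simpa [dyadicR] using one_le_pow₀ (by norm_num : (1:ℝ) ≤ 2)

lemma one_le_jap {d : ℕ} (x : EuclideanSpace ℝ (Fin d)) : 1 ≤ jap x := by
  have h1 : (1:ℝ) = Real.sqrt 1 := Real.sqrt_one.symm
  rw [jap, h1]
  exact Real.sqrt_le_sqrt (by nlinarith [norm_nonneg x])

lemma jap_pos {d : ℕ} (x : EuclideanSpace ℝ (Fin d)) : 0 < jap x :=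
  lt_of_lt_of_le one_pos (one_le_jap x)

lemma norm_le_jap {d : ℕ} (x : EuclideanSpace ℝ (Fin d)) : ‖x‖ ≤ jap x := by
  have h := Real.sqrt_le_sqrt (le_add_of_nonneg_right one_pos.le : ‖x‖^2 ≤ ‖x‖^2 + 1)
  rwa [Real.sqrt_sq (norm_nonneg x)] at h

lemma sqrt_two_le_two : Real.sqrt 2 ≤ 2 := by
  nlinarith [Real.sq_sqrt (by norm_num : (0:ℝ) ≤ 2), Real.sqrt_nonneg 2]

lemma one_le_sqrt_two : (1:ℝ) ≤ Real.sqrt 2 := by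
  rw [show (1:ℝ) = Real.sqrt 1 from Real.sqrt_one.symm]
  exact Real.sqrt_le_sqrt (by norm_num)

lemma jap_le_annulus {d : ℕ} {x : EuclideanSpace ℝ (Fin d)} {k : ℕ}
    (hx : ‖x‖ < dyadicR (k+1)) : jap x ≤ Real.sqrt 2 * dyadicR (k+1) := by
  have hR1 : 1 ≤ dyadicR (k+1) := one_le_dyadicR_succ k
  have h1 : ‖x‖^2 + 1 ≤ 2 * dyadicR (k+1) ^ 2 := by nlinarith [norm_nonneg x]
  calc jap x ≤ Real.sqrt (2 * dyadicR (k+1) ^ 2) := Real.sqrt_le_sqrt h1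
    _ = Real.sqrt 2 * dyadicR (k+1) := by
        rw [Real.sqrt_mul (by norm_num), Real.sqrt_sq (by linarith)]

lemma annulus_le_jap {d : ℕ} {x : EuclideanSpace ℝ (Fin d)} {k : ℕ}
    (hx : dyadicR k ≤ ‖x‖) : dyadicR (k+1) ≤ 2 * jap x := by
  cases k with
  | zero => simpa [dyadicR] using by linarith [one_le_jap x]
  | succ m =>
      have h1 : dyadicR (m+2) = 2 * dyadicR (m+1) := by
        simp [dyadicR, pow_succ]; ring
      rw [h1]
      have := norm_le_jap x
      linarith

lemma sqrt_jap_le {d : ℕ} {x : EuclideanSpace ℝ (Fin d)} {k : ℕ}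
    (hx : ‖x‖ < dyadicR (k+1)) :
    Real.sqrt (jap x) ≤ Real.sqrt 2 * Real.sqrt (dyadicR (k+1)) := by
  calc Real.sqrt (jap x) ≤ Real.sqrt (Real.sqrt 2 * dyadicR (k+1)) :=
        Real.sqrt_le_sqrt (jap_le_annulus hx)
    _ = Real.sqrt (Real.sqrt 2) * Real.sqrt (dyadicR (k+1)) :=
        Real.sqrt_mul (Real.sqrt_nonneg 2) _
    _ ≤ Real.sqrt 2 * Real.sqrt (dyadicR (k+1)) := by
        refine mul_le_mul_of_nonneg_right ?_ (Real.sqrt_nonneg _)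
        exact Real.sqrt_le_sqrt sqrt_two_le_two

/-- comparison of the weight at two points of the same annulus. -/
lemma tG_compare (μ lam p q : ℝ) (hμ0 : 0 < μ) (hμ2 : μ ≤ 2) (hlam : 0 ≤ lam)
    (hp1 : 1 ≤ p) (hq1 : 1 ≤ q)
    (hqp : q ≤ 2 * Real.sqrt 2 * p) (hpq : p ≤ 2 * Real.sqrt 2 * q) :
    Real.sqrt (lam + p ^ (-μ)) * p ≤ 8 * (Real.sqrt (lam + q ^ (-μ)) * q) := by
  have hp0 : (0:ℝ) < p := by linarith
  have hq0 : (0:ℝ) < q := by linarith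
  have hs2 : Real.sqrt 2 * Real.sqrt 2 = 2 := Real.mul_self_sqrt (by norm_num)
  set c : ℝ := 2 * Real.sqrt 2 with hc
  have hc0 : (0:ℝ) < c := by positivity
  have hc1 : (1:ℝ) ≤ c := by nlinarith [Real.sqrt_nonneg 2]
  have h1 : q / c ≤ p := (div_le_iff₀ hc0).mpr (by linarith [mul_comm p c])
  have h2 : p ^ (-μ) ≤ (q / c) ^ (-μ) :=
    Real.rpow_le_rpow_of_nonpos (by positivity) h1 (by linarith)
  have h3 : (q / c) ^ (-μ) = q ^ (-μ) * c ^ μ := by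
    rw [Real.div_rpow hq0.le hc0.le, Real.rpow_neg hc0.le, div_eq_mul_inv, inv_inv]
  have h4 : c ^ μ ≤ 8 := by
    calc c ^ μ ≤ c ^ (2:ℝ) := Real.rpow_le_rpow_of_exponent_le hc1 hμ2
      _ = c ^ (2:ℕ) := by rw [show (2:ℝ) = ((2:ℕ):ℝ) by norm_num, Real.rpow_natCast]
      _ ≤ 8 := by rw [hc]; nlinarith
  have h5 : p ^ (-μ) ≤ 8 * q ^ (-μ) := by
    have hqμ : (0:ℝ) ≤ q ^ (-μ) := (Real.rpow_pos_of_pos hq0 _).le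
    calc p ^ (-μ) ≤ q ^ (-μ) * c ^ μ := h3 ▸ h2
      _ ≤ q ^ (-μ) * 8 := mul_le_mul_of_nonneg_left h4 hqμ
      _ = 8 * q ^ (-μ) := by ring
  have h6 : lam + p ^ (-μ) ≤ 8 * (lam + q ^ (-μ)) := by linarith
  have h7 : Real.sqrt (lam + p ^ (-μ)) ≤ c * Real.sqrt (lam + q ^ (-μ)) := by
    calc Real.sqrt (lam + p ^ (-μ)) ≤ Real.sqrt (8 * (lam + q ^ (-μ))) :=
          Real.sqrt_le_sqrt h6
      _ = Real.sqrt 8 * Real.sqrt (lam + q ^ (-μ)) := Real.sqrt_mul (by norm_num) _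
      _ = c * Real.sqrt (lam + q ^ (-μ)) := by
          congr 1
          rw [hc, show (8:ℝ) = 2^2 * 2 by norm_num,
            Real.sqrt_mul (by positivity), Real.sqrt_sq (by norm_num)]
  have hs : 0 ≤ Real.sqrt (lam + q ^ (-μ)) := Real.sqrt_nonneg _
  calc Real.sqrt (lam + p ^ (-μ)) * p
      ≤ (c * Real.sqrt (lam + q ^ (-μ))) * (c * q) := by
        apply mul_le_mul h7 hpq hp0.le (by positivity)
    _ = (c * c) * (Real.sqrt (lam + q ^ (-μ)) * q) := by ring
    _ = 8 * (Real.sqrt (lam + q ^ (-μ)) * q) := by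
        rw [hc]; nlinarith [mul_nonneg hs hq0.le]

lemma key_bound (μ lam p : ℝ) (hμ2 : μ ≤ 2) (hlam : 0 ≤ lam) (hp1 : 1 ≤ p)
    (j : ℕ) (hj : dyadicR j ≤ Real.sqrt (lam + p ^ (-μ)) * p) :
    Real.sqrt (dyadicR (j+1)) * (lam + p ^ (-μ)) ^ (-(1/4:ℝ))
      ≤ Real.sqrt 2 * Real.sqrt p := by
  have hp0 : (0:ℝ) < p := by linarith
  have htm : (0:ℝ) < p ^ (-μ) := Real.rpow_pos_of_pos hp0 _
  have ht : 0 < lam + p ^ (-μ) := by linarith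
  set t : ℝ := lam + p ^ (-μ) with hteq
  cases j with
  | zero =>
      have h1 : dyadicR 1 = 1 := by simp [dyadicR]
      rw [h1, Real.sqrt_one, one_mul]
      have h2 : t ^ (-(1/4:ℝ)) ≤ (p ^ (-μ)) ^ (-(1/4:ℝ)) :=
        Real.rpow_le_rpow_of_nonpos htm (le_add_of_nonneg_left hlam) (by norm_num)
      have h3 : (p ^ (-μ)) ^ (-(1/4:ℝ)) = p ^ (μ/4) := by
        rw [← Real.rpow_mul hp0.le]
        congr 1
        ring
      have h4 : p ^ (μ/4) ≤ p ^ (1/2:ℝ) :=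
        Real.rpow_le_rpow_of_exponent_le hp1 (by linarith)
      have h5 : p ^ (1/2:ℝ) = Real.sqrt p := (Real.sqrt_eq_rpow p).symm
      calc t ^ (-(1/4:ℝ)) ≤ (p ^ (-μ)) ^ (-(1/4:ℝ)) := h2
        _ = p ^ (μ/4) := h3
        _ ≤ p ^ (1/2:ℝ) := h4
        _ = Real.sqrt p := h5
        _ ≤ Real.sqrt 2 * Real.sqrt p := by
            nlinarith [Real.sqrt_nonneg p, one_le_sqrt_two]
  | succ m =>
      have hs : 0 < Real.sqrt t := Real.sqrt_pos.mpr ht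
      have hss : 0 < Real.sqrt (Real.sqrt t) := Real.sqrt_pos.mpr hs
      have hR : dyadicR (m+2) = 2 * dyadicR (m+1) := by
        simp [dyadicR, pow_succ]; ring
      have h1 : Real.sqrt (dyadicR (m+2))
          ≤ Real.sqrt 2 * (Real.sqrt (Real.sqrt t) * Real.sqrt p) := by
        calc Real.sqrt (dyadicR (m+2)) = Real.sqrt (2 * dyadicR (m+1)) := by rw [hR]
          _ ≤ Real.sqrt (2 * (Real.sqrt t * p)) := Real.sqrt_le_sqrt (by linarith)
          _ = Real.sqrt 2 * (Real.sqrt (Real.sqrt t) * Real.sqrt p) := by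
              rw [Real.sqrt_mul (by norm_num), Real.sqrt_mul hs.le]
      have h2 : t ^ (-(1/4:ℝ)) = (Real.sqrt (Real.sqrt t))⁻¹ := by
        rw [Real.sqrt_eq_rpow, Real.sqrt_eq_rpow, ← Real.rpow_mul ht.le,
          ← Real.rpow_neg ht.le]
        norm_num
      rw [h2]
      have h3 : Real.sqrt (dyadicR (m+1+1)) * (Real.sqrt (Real.sqrt t))⁻¹
          ≤ (Real.sqrt 2 * (Real.sqrt (Real.sqrt t) * Real.sqrt p))
              * (Real.sqrt (Real.sqrt t))⁻¹ :=
        mul_le_mul_of_nonneg_right h1 (by positivity)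
      refine h3.trans_eq ?_
      field_simp

/-- for `μ ∈ (0,2)` and `λ₀ > 0` there is `C = C(μ) > 0` such that,
with `f_λ(x) = (λ + ⟨x⟩^{-μ})^{1/2}`, for all `λ ∈ [0, λ₀]` and all `u ∈ B(|x|)`,
`‖f_λ^{-1/2} u‖_{B(f_λ⟨x⟩)} ≤ C ‖u‖_{B(|x|)}`. -/
theorem stmt15 (d : ℕ) (μ : ℝ) (hμ0 : 0 < μ) (hμ2 : μ < 2) (lam₀ : ℝ) (hlam₀ : 0 < lam₀) :
    ∃ C > (0 : ℝ), ∀ lam : ℝ, 0 ≤ lam → lam ≤ lam₀ → ∀ u : EuclideanSpace ℝ (Fin d) → ℂ,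
      besovE volume (fun x => Real.sqrt (lam + jap x ^ (-μ)) * jap x)
          (fun x => (((lam + jap x ^ (-μ)) ^ (-(1 / 4 : ℝ)) : ℝ) • u x))
        ≤ ENNReal.ofReal C * besovE volume (fun x => ‖x‖) u := by
  have hμ2' : μ ≤ 2 := hμ2.le
  refine ⟨14, by norm_num, ?_⟩
  intro lam hlam _ u
  classical
  set G : EuclideanSpace ℝ (Fin d) → ℝ :=
    fun x => Real.sqrt (lam + jap x ^ (-μ)) * jap x with hGdef
  set v : EuclideanSpace ℝ (Fin d) → ℂ :=
    fun x => (((lam + jap x ^ (-μ)) ^ (-(1 / 4 : ℝ)) : ℝ) • u x) with hvdef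
  set A : ℕ → Set (EuclideanSpace ℝ (Fin d)) :=
    fun k => {x | dyadicR k ≤ |‖x‖| ∧ |‖x‖| < dyadicR (k+1)} with hAdef
  set B : ℕ → Set (EuclideanSpace ℝ (Fin d)) :=
    fun j => {x | dyadicR j ≤ |G x| ∧ |G x| < dyadicR (j+1)} with hBdef
  have ht_pos : ∀ x : EuclideanSpace ℝ (Fin d), 0 < lam + jap x ^ (-μ) := fun x =>
    add_pos_of_nonneg_of_pos hlam (Real.rpow_pos_of_pos (jap_pos x) _)
  have hGnn : ∀ x, 0 ≤ G x := fun x =>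
    mul_nonneg (Real.sqrt_nonneg _) (jap_pos x).le
  -- measurability
  have hjc : Continuous (jap (d := d)) :=
    Real.continuous_sqrt.comp ((continuous_norm.pow 2).add continuous_const)
  have hGc : Continuous G := by
    refine Continuous.mul ?_ hjc
    refine Real.continuous_sqrt.comp ?_
    exact Continuous.add continuous_const
      (hjc.rpow_const fun x => Or.inl (jap_pos x).ne')
  have hAm : ∀ k, MeasurableSet (A k) := by
    intro k
    have : A k = {x | dyadicR k ≤ |‖x‖|} ∩ {x | |‖x‖| < dyadicR (k+1)} := by
      rw [hAdef, ← Set.setOf_and]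
    rw [this]
    have hnm : Measurable fun x : EuclideanSpace ℝ (Fin d) => |‖x‖| :=
      measurable_norm.abs
    exact (measurableSet_le measurable_const hnm).inter
      (measurableSet_lt hnm measurable_const)
  have hBm : ∀ j, MeasurableSet (B j) := by
    intro j
    have : B j = {x | dyadicR j ≤ |G x|} ∩ {x | |G x| < dyadicR (j+1)} := by
      rw [hBdef, ← Set.setOf_and]
    rw [this]
    have hGm : Measurable fun x => |G x| := hGc.measurable.abs
    exact (measurableSet_le measurable_const hGm).inter
      (measurableSet_lt hGm measurable_const)
  -- cover and disjointness of the annuli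
  have hAmem : ∀ k x, x ∈ A k ↔ dyadicR k ≤ ‖x‖ ∧ ‖x‖ < dyadicR (k+1) := by
    intro k x
    simp [hAdef, abs_norm]
  have hAcov : (⋃ k, A k) = Set.univ := by
    apply Set.eq_univ_of_forall
    intro x
    obtain ⟨k, h1, h2⟩ := exists_dyadic (norm_nonneg x)
    exact Set.mem_iUnion.mpr ⟨k, (hAmem k x).mpr ⟨h1, h2⟩⟩
  have hAdis : Pairwise (Function.onFun Disjoint A) := by
    intro k m hkm
    rw [Function.onFun, Set.disjoint_left]
    intro x hxk hxm
    rw [hAmem] at hxk hxm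
    rcases Nat.lt_or_ge k m with h | h
    · have h1 : dyadicR (k+1) ≤ dyadicR m := dyadicR_mono h
      linarith [hxk.2, hxm.1]
    · have hmk : m < k := by omega
      have h1 : dyadicR (m+1) ≤ dyadicR k := dyadicR_mono hmk
      linarith [hxm.2, hxk.1]
  -- weight comparison within an annulus
  have hGAA : ∀ k, ∀ x ∈ A k, ∀ y ∈ A k, G x ≤ 8 * G y := by
    intro k x hx y hy
    rw [hAmem] at hx hy
    refine tG_compare μ lam (jap x) (jap y) hμ0 hμ2' hlam (one_le_jap x)
      (one_le_jap y) ?_ ?_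
    · calc jap y ≤ Real.sqrt 2 * dyadicR (k+1) := jap_le_annulus hy.2
        _ ≤ Real.sqrt 2 * (2 * jap x) :=
            mul_le_mul_of_nonneg_left (annulus_le_jap hx.1) (Real.sqrt_nonneg 2)
        _ = 2 * Real.sqrt 2 * jap x := by ring
    · calc jap x ≤ Real.sqrt 2 * dyadicR (k+1) := jap_le_annulus hx.2
        _ ≤ Real.sqrt 2 * (2 * jap y) :=
            mul_le_mul_of_nonneg_left (annulus_le_jap hy.1) (Real.sqrt_nonneg 2)
        _ = 2 * Real.sqrt 2 * jap y := by ring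
  -- window lemma
  have hwin : ∀ k j m, (B j ∩ A k).Nonempty → (B m ∩ A k).Nonempty → j ≤ m + 3 := by
    intro k j m ⟨x, hxB, hxA⟩ ⟨y, hyB, hyA⟩
    by_contra hlt
    push_neg at hlt
    have hGx : dyadicR j ≤ G x := by
      have := hxB.1; rwa [abs_of_nonneg (hGnn x)] at this
    have hGy : G y < dyadicR (m+1) := by
      have := hyB.2; rwa [abs_of_nonneg (hGnn y)] at this
    obtain ⟨i, rfl⟩ : ∃ i, j = i + 1 := ⟨j - 1, by omega⟩
    have h1 : (2:ℝ)^(m+3) ≤ 2^i := pow_le_pow_right₀ one_le_two (by omega)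
    have h2 : G x ≤ 8 * G y := hGAA k x hxA y hyA
    have h3 : (2:ℝ)^(m+3) = 8 * 2^m := by rw [pow_add]; ring
    have h4 : dyadicR (i+1) = (2:ℝ)^i := by simp [dyadicR]
    have h5 : dyadicR (m+1) = (2:ℝ)^m := by simp [dyadicR]
    rw [h4] at hGx
    rw [h5] at hGy
    linarith
  -- step C: bounded overlap
  have stepC : ∀ k, (∑' j, eLpNorm ((B j ∩ A k).indicator u) 2 volume)
      ≤ 7 * eLpNorm ((A k).indicator u) 2 volume := by
    intro k
    have hle : ∀ j, eLpNorm ((B j ∩ A k).indicator u) 2 volume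
        ≤ eLpNorm ((A k).indicator u) 2 volume := by
      intro j
      refine eLpNorm_mono fun x => ?_
      by_cases hx : x ∈ B j ∩ A k
      · rw [Set.indicator_of_mem hx, Set.indicator_of_mem hx.2]
      · rw [Set.indicator_of_notMem hx]
        simp [norm_nonneg]
    by_cases hne : ∃ m, (B m ∩ A k).Nonempty
    · obtain ⟨m, hm⟩ := hne
      have hz : ∀ j ∉ Finset.Icc (m-3) (m+3),
          eLpNorm ((B j ∩ A k).indicator u) 2 volume = 0 := by
        intro j hj
        have hemp : B j ∩ A k = ∅ := by
          by_contra h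
          have hne' := Set.nonempty_iff_ne_empty.mpr h
          have h1 := hwin k j m hne' hm
          have h2 := hwin k m j hm hne'
          rw [Finset.mem_Icc] at hj
          omega
        rw [hemp]
        simp
      rw [tsum_eq_sum hz]
      calc ∑ j ∈ Finset.Icc (m-3) (m+3), eLpNorm ((B j ∩ A k).indicator u) 2 volume
          ≤ (Finset.Icc (m-3) (m+3)).card •
              eLpNorm ((A k).indicator u) 2 volume :=
            Finset.sum_le_card_nsmul _ _ _ fun j _ => hle j
        _ ≤ 7 * eLpNorm ((A k).indicator u) 2 volume := by
            rw [nsmul_eq_mul]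
            refine mul_le_mul_left ?_ _
            have hcard : (Finset.Icc (m-3) (m+3)).card ≤ 7 := by
              rw [Nat.card_Icc]; omega
            exact_mod_cast hcard
    · push_neg at hne
      have hz : ∀ j, eLpNorm ((B j ∩ A k).indicator u) 2 volume = 0 := by
        intro j
        rw [hne j]
        simp
      simp [hz]
  -- main chain
  calc besovE volume G v
      = ∑' j, ENNReal.ofReal (Real.sqrt (dyadicR (j+1)))
          * eLpNorm ((B j).indicator v) 2 volume := rfl
    _ ≤ ∑' j, ∑' k, ENNReal.ofReal (Real.sqrt (dyadicR (j+1)))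
          * eLpNorm ((B j ∩ A k).indicator v) 2 volume := by
        refine ENNReal.tsum_le_tsum fun j => ?_
        rw [ENNReal.tsum_mul_left]
        refine mul_le_mul_right ?_ _
        have hBj : B j = ⋃ k, B j ∩ A k := by
          rw [← Set.inter_iUnion, hAcov, Set.inter_univ]
        calc eLpNorm ((B j).indicator v) 2 volume
            = eLpNorm ((⋃ k, B j ∩ A k).indicator v) 2 volume := by rw [← hBj]
          _ ≤ _ := eLpNorm_indicator_le_tsum volume v _
              (fun k => (hBm j).inter (hAm k))
              (fun k m hkm => (hAdis hkm).mono Set.inter_subset_right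
                Set.inter_subset_right)
    _ = ∑' k, ∑' j, ENNReal.ofReal (Real.sqrt (dyadicR (j+1)))
          * eLpNorm ((B j ∩ A k).indicator v) 2 volume := ENNReal.tsum_comm
    _ ≤ ∑' k, ∑' j, ENNReal.ofReal (2 * Real.sqrt (dyadicR (k+1)))
          * eLpNorm ((B j ∩ A k).indicator u) 2 volume := by
        refine ENNReal.tsum_le_tsum fun k => ENNReal.tsum_le_tsum fun j => ?_
        refine block_scale volume v u _ _ _ (Real.sqrt_nonneg _) (by positivity) ?_
        intro x hx
        obtain ⟨hxB, hxA⟩ := hx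
        have hGx : dyadicR j ≤ G x := by
          have := hxB.1; rwa [abs_of_nonneg (hGnn x)] at this
        have hk1 := key_bound μ lam (jap x) hμ2' hlam (one_le_jap x) j hGx
        have hxnorm : ‖x‖ < dyadicR (k+1) := ((hAmem k x).mp hxA).2
        have hk2 := sqrt_jap_le hxnorm
        have hs2 : Real.sqrt 2 * Real.sqrt 2 = 2 := Real.mul_self_sqrt (by norm_num)
        have hkey : Real.sqrt (dyadicR (j+1)) * (lam + jap x ^ (-μ)) ^ (-(1/4:ℝ))
            ≤ 2 * Real.sqrt (dyadicR (k+1)) := by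
          calc Real.sqrt (dyadicR (j+1)) * (lam + jap x ^ (-μ)) ^ (-(1/4:ℝ))
              ≤ Real.sqrt 2 * Real.sqrt (jap x) := hk1
            _ ≤ Real.sqrt 2 * (Real.sqrt 2 * Real.sqrt (dyadicR (k+1))) :=
                mul_le_mul_of_nonneg_left hk2 (Real.sqrt_nonneg 2)
            _ = 2 * Real.sqrt (dyadicR (k+1)) := by rw [← mul_assoc, hs2]
        have hvx : ‖v x‖ = (lam + jap x ^ (-μ)) ^ (-(1/4:ℝ)) * ‖u x‖ := by
          rw [hvdef]
          simp only [norm_smul]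
          rw [Real.norm_of_nonneg (Real.rpow_pos_of_pos (ht_pos x) _).le]
        rw [hvx, ← mul_assoc]
        exact mul_le_mul_of_nonneg_right hkey (norm_nonneg _)
    _ = ∑' k, ENNReal.ofReal (2 * Real.sqrt (dyadicR (k+1)))
          * ∑' j, eLpNorm ((B j ∩ A k).indicator u) 2 volume := by
        exact tsum_congr fun k => (ENNReal.tsum_mul_left).symm ▸ rfl
    _ ≤ ∑' k, ENNReal.ofReal (2 * Real.sqrt (dyadicR (k+1)))
          * (7 * eLpNorm ((A k).indicator u) 2 volume) := by
        exact ENNReal.tsum_le_tsum fun k => mul_le_mul_right (stepC k) _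
    _ = ENNReal.ofReal 14 * ∑' k, ENNReal.ofReal (Real.sqrt (dyadicR (k+1)))
          * eLpNorm ((A k).indicator u) 2 volume := by
        rw [← ENNReal.tsum_mul_left]
        refine tsum_congr fun k => ?_
        have h7 : (7:ℝ≥0∞) = ENNReal.ofReal 7 := by norm_num
        calc ENNReal.ofReal (2 * Real.sqrt (dyadicR (k+1)))
              * (7 * eLpNorm ((A k).indicator u) 2 volume)
            = (ENNReal.ofReal 2 * ENNReal.ofReal (Real.sqrt (dyadicR (k+1))))
              * (ENNReal.ofReal 7 * eLpNorm ((A k).indicator u) 2 volume) := by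
              rw [ENNReal.ofReal_mul (by norm_num : (0:ℝ) ≤ 2), h7]
          _ = (ENNReal.ofReal 2 * ENNReal.ofReal 7)
              * (ENNReal.ofReal (Real.sqrt (dyadicR (k+1)))
                * eLpNorm ((A k).indicator u) 2 volume) := by ring
          _ = ENNReal.ofReal 14 * (ENNReal.ofReal (Real.sqrt (dyadicR (k+1)))
                * eLpNorm ((A k).indicator u) 2 volume) := by
              rw [← ENNReal.ofReal_mul (by norm_num : (0:ℝ) ≤ 2)]
              norm_num
    _ = ENNReal.ofReal 14 * besovE volume (fun x => ‖x‖) u := rfl
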